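/- Let E and F be compact topological graphs locally conjugate via a homeomorphism τ : E^0 → F^0, and let (U_i)_{1≤i≤n} be an admissible open cover of E^0 with sheets U_{ik} (1 ≤ k ≤ m, m constant) and intertwining homeomorphisms γ_i : s_E^{-1}(U_i) → s_F^{-1}(τ(U_i)); set V_i = τ(U_i) and V_{ik} = γ_i(U_{ik}). Assume the permutation data of E and F agree: whenever U_i ∩ U_j ≠ ∅, for all k, l one has U_{ik} ∩ U_{jl} ≠ ∅ if and only if V_{ik} ∩ V_{jl} ≠ ∅. Then γ_i and γ_j agree on s_E^{-1}(U_i ∩ U_j) for all i, j, and hence γ = ⋃_{1≤i≤n} γ_i is a well-defined homeomorphism of E^1 onto F^1 satisfying s_F ∘ γ = τ ∘ s_E and r_F ∘ γ = τ ∘ r_E. -/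

import Mathlib

/-- `f` maps `A ⊆ X` homeomorphically onto `B ⊆ Y`: there is a partial homeomorphism
with source `A` and target `B` agreeing with `f` on `A`. -/
def MapsHomeoOn {X Y : Type*} [TopologicalSpace X] [TopologicalSpace Y]
    (f : X → Y) (A : Set X) (B : Set Y) : Prop :=
  ∃ e : PartialHomeomorph X Y, e.source = A ∧ e.target = B ∧ Set.EqOn f e A

/-- Let `E`, `F` be compact topological graphs locally conjugate via
`τ : E⁰ → F⁰`, and let `(U_i)_{1≤i≤n}` be an admissible open cover of `E⁰` (conditions
(C1)–(C6)) with sheets `U_{ik}` (`1 ≤ k ≤ m`, `m` constant) and intertwining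
homeomorphisms `γ_i : s_E⁻¹(U_i) → s_F⁻¹(τ(U_i))`; set `V_i = τ(U_i)` and
`V_{ik} = γ_i(U_{ik})`.  Assume the permutation data of `E` and `F` agree: whenever
`U_i ∩ U_j ≠ ∅`, for all `k, l` one has `U_{ik} ∩ U_{jl} ≠ ∅ ↔ V_{ik} ∩ V_{jl} ≠ ∅`.
Then `γ_i` and `γ_j` agree on `s_E⁻¹(U_i ∩ U_j)` for all `i, j`, and hence
`γ = ⋃ γ_i` is a well-defined homeomorphism of `E¹` onto `F¹` with
`s_F ∘ γ = τ ∘ s_E` and `r_F ∘ γ = τ ∘ r_E`. -/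
theorem glue_local_conjugacies
    {E0 E1 F0 F1 : Type*}
    [TopologicalSpace E0] [TopologicalSpace E1] [TopologicalSpace F0] [TopologicalSpace F1]
    [CompactSpace E0] [CompactSpace E1] [CompactSpace F0] [CompactSpace F1]
    [T2Space E0] [T2Space E1] [T2Space F0] [T2Space F1]
    (rE sE : E1 → E0) (hrE : Continuous rE) (hsE : IsLocalHomeomorph sE)
    (rF sF : F1 → F0) (hrF : Continuous rF) (hsF : IsLocalHomeomorph sF)
    (τ : E0 ≃ₜ F0)
    (n m : ℕ) (U : Fin n → Set E0) (Ue : Fin n → Fin m → Set E1) (γ : Fin n → E1 → F1)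
    (hUo : ∀ i, IsOpen (U i)) (hUcov : (⋃ i, U i) = Set.univ)
    -- (C1)
    (hC1 : ∀ i, (∀ k, IsOpen (Ue i k)) ∧
      (∀ k l, k ≠ l → Disjoint (Ue i k) (Ue i l)) ∧
      sE ⁻¹' (U i) = ⋃ k, Ue i k ∧
      ∀ k, MapsHomeoOn sE (Ue i k) (U i))
    -- (C2)
    (hC2 : ∀ i, MapsHomeoOn (γ i) (sE ⁻¹' (U i)) (sF ⁻¹' (τ '' U i)) ∧
      ∀ x ∈ sE ⁻¹' (U i), sF (γ i x) = τ (sE x) ∧ rF (γ i x) = τ (rE x))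
    -- (C3)
    (hC3 : ∀ i j p : Fin n, i ≠ j → j ≠ p → i ≠ p → U i ∩ U j ∩ U p = ∅)
    -- (C4)
    (hC4 : ∀ i j : Fin n, i ≠ j → Disjoint (closure (U i) \ U j) (closure (U j) \ U i))
    -- (C5)
    (hC5 : ∀ i j : Fin n, (U i ∩ U j).Nonempty →
      ∃ π : Fin m ≃ Fin m, ∀ k l, (Ue i k ∩ Ue j l).Nonempty ↔ l = π k)
    -- (C6)
    (hC6 : ∀ i j : Fin n, ((τ '' U i) ∩ (τ '' U j)).Nonempty →
      ∃ π : Fin m ≃ Fin m,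
        ∀ k l, ((γ i '' Ue i k) ∩ (γ j '' Ue j l)).Nonempty ↔ l = π k)
    -- the permutation data of `E` and `F` agree
    (hagree : ∀ i j : Fin n, (U i ∩ U j).Nonempty → ∀ k l,
      ((Ue i k ∩ Ue j l).Nonempty ↔ ((γ i '' Ue i k) ∩ (γ j '' Ue j l)).Nonempty)) :
    (∀ i j : Fin n, Set.EqOn (γ i) (γ j) (sE ⁻¹' (U i ∩ U j))) ∧
    ∃ g : E1 ≃ₜ F1,
      (∀ i, Set.EqOn (⇑g) (γ i) (sE ⁻¹' (U i))) ∧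
      (∀ x, sF (g x) = τ (sE x)) ∧ (∀ x, rF (g x) = τ (rE x)) := by
  classical
  -- Basic data extracted from (C1)
  have hsheet_sub : ∀ i k, Ue i k ⊆ sE ⁻¹' (U i) := by
    intro i k x hx
    rw [(hC1 i).2.2.1]
    exact Set.mem_iUnion.2 ⟨k, hx⟩
  have hsE_inj : ∀ i k, Set.InjOn sE (Ue i k) := by
    intro i k
    obtain ⟨e, hs, ht, heq⟩ := (hC1 i).2.2.2 k
    intro a ha b hb hab
    refine e.injOn (by rw [hs]; exact ha) (by rw [hs]; exact hb) ?_
    rw [← heq ha, ← heq hb]; exact hab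
  -- Basic data extracted from (C2)
  have hγ_inj : ∀ i, Set.InjOn (γ i) (sE ⁻¹' (U i)) := by
    intro i
    obtain ⟨⟨e, hs, ht, heq⟩, -⟩ := hC2 i
    intro a ha b hb hab
    refine e.injOn (by rw [hs]; exact ha) (by rw [hs]; exact hb) ?_
    rw [← heq ha, ← heq hb]; exact hab
  have hγ_img : ∀ i, γ i '' (sE ⁻¹' (U i)) = sF ⁻¹' (τ '' U i) := by
    intro i
    obtain ⟨⟨e, hs, ht, heq⟩, -⟩ := hC2 i
    rw [← hs, Set.EqOn.image_eq (by rw [hs]; exact heq), e.image_source_eq_target, ht]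
  have hγ_cont : ∀ i, ContinuousOn (γ i) (sE ⁻¹' (U i)) := by
    intro i
    obtain ⟨⟨e, hs, ht, heq⟩, -⟩ := hC2 i
    exact ContinuousOn.congr (hs ▸ e.continuousOn) heq
  have hγ_sF : ∀ i, ∀ x ∈ sE ⁻¹' (U i), sF (γ i x) = τ (sE x) := fun i x hx => ((hC2 i).2 x hx).1
  have hγ_rF : ∀ i, ∀ x ∈ sE ⁻¹' (U i), rF (γ i x) = τ (rE x) := fun i x hx => ((hC2 i).2 x hx).2
  -- The key compatibility statement
  have key : ∀ i j : Fin n, Set.EqOn (γ i) (γ j) (sE ⁻¹' (U i ∩ U j)) := by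
    intro i j x hx
    rcases eq_or_ne i j with rfl | hij
    · rfl
    have hxi : x ∈ sE ⁻¹' (U i) := hx.1
    have hxj : x ∈ sE ⁻¹' (U j) := hx.2
    have hne : (U i ∩ U j).Nonempty := ⟨sE x, hx⟩
    obtain ⟨π, hπ⟩ := hC5 i j hne
    -- sheets containing x
    obtain ⟨k, hk⟩ : ∃ k, x ∈ Ue i k := by
      have := hxi; rw [(hC1 i).2.2.1] at this; exact Set.mem_iUnion.1 this
    obtain ⟨l, hl⟩ : ∃ l, x ∈ Ue j l := by
      have := hxj; rw [(hC1 j).2.2.1] at this; exact Set.mem_iUnion.1 this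
    have hlk : l = π k := (hπ k l).1 ⟨x, hk, hl⟩
    -- γ j x lies in some sheet image of γ i
    have hy : γ j x ∈ γ i '' (sE ⁻¹' (U i)) := by
      rw [hγ_img i]
      show sF (γ j x) ∈ τ '' U i
      rw [hγ_sF j x hxj]
      exact ⟨sE x, hx.1, rfl⟩
    rw [(hC1 i).2.2.1, Set.image_iUnion] at hy
    obtain ⟨k', hk'⟩ := Set.mem_iUnion.1 hy
    have hk'k : k' = k := by
      have hne' : ((γ i '' Ue i k') ∩ (γ j '' Ue j l)).Nonempty :=
        ⟨γ j x, hk', ⟨x, hl, rfl⟩⟩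
      have : (Ue i k' ∩ Ue j l).Nonempty := (hagree i j hne k' l).2 hne'
      have hlk' : l = π k' := (hπ k' l).1 this
      exact π.injective (hlk' ▸ hlk)
    rw [hk'k] at hk'
    obtain ⟨x'', hx'', hx''e⟩ := hk'
    have hx''i : x'' ∈ sE ⁻¹' (U i) := hsheet_sub i k hx''
    have hsx : sE x'' = sE x := by
      have h1 : τ (sE x'') = sF (γ i x'') := (hγ_sF i x'' hx''i).symm
      have h2 : sF (γ j x) = τ (sE x) := hγ_sF j x hxj
      apply τ.injective
      rw [h1, hx''e, h2]
    have : x'' = x := hsE_inj i k hx'' hk hsx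
    rw [← hx''e, this]
  refine ⟨key, ?_⟩
  -- define the global map
  have hex : ∀ x : E1, ∃ i, sE x ∈ U i := by
    intro x
    have : sE x ∈ ⋃ i, U i := hUcov ▸ Set.mem_univ _
    exact Set.mem_iUnion.1 this
  set g : E1 → F1 := fun x => γ (hex x).choose x with hg
  have hidx : ∀ x, sE x ∈ U (hex x).choose := fun x => (hex x).choose_spec
  have hg_eq : ∀ i, ∀ x ∈ sE ⁻¹' (U i), g x = γ i x := by
    intro i x hx
    exact key (hex x).choose i ⟨hidx x, hx⟩
  have hg_sF : ∀ x, sF (g x) = τ (sE x) := fun x => hγ_sF _ x (hidx x)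
  have hg_rF : ∀ x, rF (g x) = τ (rE x) := fun x => hγ_rF _ x (hidx x)
  -- bijectivity
  have hg_inj : Function.Injective g := by
    intro x1 x2 h
    have hs12 : sE x1 = sE x2 := by
      apply τ.injective
      rw [← hg_sF x1, ← hg_sF x2, h]
    set i := (hex x1).choose
    have hx2i : x2 ∈ sE ⁻¹' (U i) := by
      show sE x2 ∈ U i; rw [← hs12]; exact hidx x1
    have h2 : g x2 = γ i x2 := hg_eq i x2 hx2i
    have h1 : g x1 = γ i x1 := rfl
    exact hγ_inj i (hidx x1) hx2i (by rw [← h1, ← h2, h])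
  have hg_surj : Function.Surjective g := by
    intro y
    have : sF y ∈ ⋃ i, τ '' U i := by
      rw [← Set.image_iUnion, hUcov, Set.image_univ, Set.range_eq_univ.2 τ.surjective]
      exact Set.mem_univ _
    obtain ⟨i, hi⟩ := Set.mem_iUnion.1 this
    have : y ∈ γ i '' (sE ⁻¹' (U i)) := by rw [hγ_img i]; exact hi
    obtain ⟨x, hx, hxe⟩ := this
    exact ⟨x, by rw [hg_eq i x hx, hxe]⟩
  -- continuity
  have hg_cont : Continuous g := by
    rw [continuous_iff_continuousAt]
    intro x
    set i := (hex x).choose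
    have hopen : IsOpen (sE ⁻¹' (U i)) := (hUo i).preimage hsE.continuous
    have : ContinuousOn g (sE ⁻¹' (U i)) :=
      (hγ_cont i).congr (fun y hy => hg_eq i y hy)
    exact this.continuousAt (hopen.mem_nhds (hidx x))
  let eqv : E1 ≃ F1 := Equiv.ofBijective g ⟨hg_inj, hg_surj⟩
  have heqv : Continuous eqv := hg_cont
  refine ⟨heqv.homeoOfEquivCompactToT2, ?_, hg_sF, hg_rF⟩
  intro i x hx
  exact hg_eq i x hx
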